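/- arXiv:math/9210206 — 2 statements merged into one kernel-verified Lean document; each statement's English description precedes it below -/
import Mathlib

section
/- For every θ ∈ (0,1) there exists a constant C = C(θ) such that for every complex Banach space E, every positive integer n, and every function f : Ā → E which is continuous on Ā, analytic on Ω, and satisfies ‖f(z)‖_E ≤ 1 for all z ∈ Ā, one has ‖f(e^θ) − Σ_{|k|≤n} f̂(k) e^{θk} − Σ_{n<|k|≤2n} (2 − |k|/n) f̂(k) e^{θk}‖_E ≤ C(e^{−n(1−θ)} + e^{−nθ}). -/
open MeasureTheory Filter Topology

/-- The closed annulus `Ā = {z : 1 ≤ |z| ≤ e}`. -/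
noncomputable def closedAnnulus : Set ℂ :=
  {z : ℂ | 1 ≤ ‖z‖ ∧ ‖z‖ ≤ Real.exp 1}

/-- The open annulus `Ω = {z : 1 < |z| < e}`. -/
noncomputable def openAnnulus : Set ℂ :=
  {z : ℂ | 1 < ‖z‖ ∧ ‖z‖ < Real.exp 1}

/-- The `k`-th Fourier–Laurent coefficient `f̂(k) = ∫₀^{2π} f(e^{it}) e^{-ikt} dt/2π`
of a function on the annulus. -/
noncomputable def fourierLaurent {E : Type*} [NormedAddCommGroup E] [NormedSpace ℂ E]
    (f : ℂ → E) (k : ℤ) : E :=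
  (((2 * Real.pi)⁻¹ : ℝ) : ℂ) •
    ∫ t in (0:ℝ)..(2 * Real.pi),
      Complex.exp (-(Complex.I * k * t)) • f (Complex.exp (Complex.I * t))

open Set Complex intervalIntegral

variable {E : Type*} [NormedAddCommGroup E] [NormedSpace ℂ E] [CompleteSpace E]

lemma isOpen_openAnnulus : IsOpen openAnnulus :=
  (isOpen_lt continuous_const continuous_norm).inter
    (isOpen_lt continuous_norm continuous_const)

lemma circle_eq (f : ℂ → E) (k : ℤ) {r : ℝ} (hr : 0 < r) :
    (∮ z in C(0, r), z ^ (-k-1) • f z) =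
      (Complex.I * (r:ℂ) ^ (-k)) •
        ∫ t in (0:ℝ)..(2*Real.pi),
          Complex.exp (-(Complex.I * k * t)) • f ((r:ℂ) * Complex.exp (Complex.I * t)) := by
  rw [← intervalIntegral.integral_smul, circleIntegral]
  refine intervalIntegral.integral_congr fun t _ => ?_
  have hrc : (r:ℂ) ≠ 0 := Complex.ofReal_ne_zero.2 hr.ne'
  have he : Complex.exp (t * Complex.I) ≠ 0 := Complex.exp_ne_zero _
  have hcm : circleMap 0 r t = (r:ℂ) * Complex.exp (t * Complex.I) := by
    simp [circleMap]
  rw [deriv_circleMap, hcm, smul_smul, smul_smul]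
  congr 1
  · rw [mul_zpow, ← Complex.exp_int_mul]
    have e1 : (↑r:ℂ) * Complex.exp (↑t*Complex.I) * Complex.I *
        ((↑r:ℂ)^(-k-1) * Complex.exp ((↑(-k-1):ℂ) * (↑t*Complex.I)))
        = Complex.I * ((↑r:ℂ)^(-k-1) * ↑r) *
          (Complex.exp (↑t*Complex.I) * Complex.exp ((↑(-k-1):ℂ)*(↑t*Complex.I))) := by
      ring
    rw [e1, ← Complex.exp_add, ← zpow_add_one₀ hrc]
    norm_num
    left
    push_cast
    ring
  · rw [mul_comm (t:ℂ) Complex.I]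

lemma contour_shift (f : ℂ → E) (hc : ContinuousOn f closedAnnulus)
    (hd : DifferentiableOn ℂ f openAnnulus) {r : ℝ} (hr1 : 1 ≤ r) (hre : r ≤ Real.exp 1)
    (k : ℤ) :
    (∫ t in (0:ℝ)..(2*Real.pi), Complex.exp (-(Complex.I * k * t)) • f (Complex.exp (Complex.I * t)))
      = ((r:ℂ) ^ (-k)) •
        ∫ t in (0:ℝ)..(2*Real.pi),
          Complex.exp (-(Complex.I * k * t)) • f ((r:ℂ) * Complex.exp (Complex.I * t)) := by
  have h0 : (0:ℝ) < 1 := one_pos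
  have hrpos : (0:ℝ) < r := lt_of_lt_of_le one_pos hr1
  have hann : (∮ z in C((0:ℂ), r), z ^ (-k-1) • f z) = ∮ z in C((0:ℂ), 1), z ^ (-k-1) • f z := by
    apply circleIntegral_eq_of_differentiable_on_annulus_off_countable h0 hr1
      Set.countable_empty
    · intro z hz
      have hz1 : 1 ≤ ‖z‖ := by
        simpa using hz.2
      have hz2 : ‖z‖ ≤ Real.exp 1 := by
        have := hz.1
        simp only [Metric.mem_closedBall, Complex.dist_eq, sub_zero] at this
        exact this.trans hre
      have hz0 : z ≠ 0 := by
        intro h; rw [h] at hz1; simp at hz1; linarith [hz1]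
      have hsub : Metric.closedBall (0:ℂ) r \ Metric.ball 0 1 ⊆ closedAnnulus := by
        intro w hw
        refine ⟨by simpa using hw.2, ?_⟩
        have := hw.1
        simp only [Metric.mem_closedBall, Complex.dist_eq, sub_zero] at this
        exact this.trans hre
      exact ((continuousAt_zpow₀ z (-k-1) (Or.inl hz0)).continuousWithinAt).smul
        ((hc.mono hsub) z hz)
    · intro z hz
      have hz1 : 1 < ‖z‖ := by
        have := hz.1.2
        simp only [Metric.mem_closedBall, Complex.dist_eq, sub_zero, not_le] at this
        exact this
      have hz2 : ‖z‖ < Real.exp 1 := by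
        have := hz.1.1
        simp only [Metric.mem_ball, Complex.dist_eq, sub_zero] at this
        exact lt_of_lt_of_le this hre
      have hz0 : z ≠ 0 := by
        intro h; rw [h] at hz1; simp at hz1; linarith [hz1]
      exact (differentiableAt_zpow.2 (Or.inl hz0)).smul
        (hd.differentiableAt (isOpen_openAnnulus.mem_nhds ⟨hz1, hz2⟩))
  rw [circle_eq f k hrpos, circle_eq f k h0] at hann
  have hI : (Complex.I : ℂ) ≠ 0 := Complex.I_ne_zero
  have hrk : ((r:ℂ)) ^ (-k) ≠ 0 := by
    apply zpow_ne_zero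
    exact Complex.ofReal_ne_zero.2 hrpos.ne'
  -- hann : (I * r^(-k)) • ∫_r = (I * 1^(-k)) • ∫_1
  simp only [Complex.ofReal_one, one_zpow, mul_one, one_mul] at hann
  have := hann.symm
  -- I • ∫_1 = (I * r^(-k)) • ∫_r
  rw [mul_smul] at this
  exact smul_right_injective E hI this

lemma abs_exp_I_mul (t : ℝ) : ‖Complex.exp (Complex.I * t)‖ = 1 := by
  rw [Complex.norm_exp]
  simp

lemma mem_closedAnnulus_of (r : ℝ) (hr1 : 1 ≤ r) (hre : r ≤ Real.exp 1) (t : ℝ) :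
    (r:ℂ) * Complex.exp (Complex.I * t) ∈ closedAnnulus := by
  have : ‖(r:ℂ) * Complex.exp (Complex.I * t)‖ = r := by
    rw [norm_mul, abs_exp_I_mul, Complex.norm_real, Real.norm_eq_abs, abs_of_pos (lt_of_lt_of_le one_pos hr1),
      mul_one]
  exact ⟨by rw [this]; exact hr1, by rw [this]; exact hre⟩

lemma abs_exp_neg_I_int (k : ℤ) (t : ℝ) :
    ‖Complex.exp (-(Complex.I * k * t))‖ = 1 := by
  rw [Complex.norm_exp]
  have : (-(Complex.I * k * t)).re = 0 := by simp
  rw [this, Real.exp_zero]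

lemma norm_fourierLaurent_le (f : ℂ → E) (hc : ContinuousOn f closedAnnulus)
    (hd : DifferentiableOn ℂ f openAnnulus) (hb : ∀ z ∈ closedAnnulus, ‖f z‖ ≤ 1)
    {r : ℝ} (hr1 : 1 ≤ r) (hre : r ≤ Real.exp 1) (k : ℤ) :
    ‖fourierLaurent f k‖ ≤ r ^ (-k) := by
  have hrpos : (0:ℝ) < r := lt_of_lt_of_le one_pos hr1
  rw [fourierLaurent, contour_shift f hc hd hr1 hre k]
  rw [norm_smul, norm_smul]
  have h1 : ‖(((2 * Real.pi)⁻¹ : ℝ) : ℂ)‖ = (2 * Real.pi)⁻¹ := by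
    rw [Complex.norm_real, Real.norm_eq_abs, abs_of_pos (by positivity)]
  have h2 : ‖((r:ℂ) ^ (-k))‖ = r ^ (-k) := by
    rw [norm_zpow, Complex.norm_real, Real.norm_eq_abs, abs_of_pos hrpos]
  have h3 : ‖∫ t in (0:ℝ)..(2*Real.pi),
      Complex.exp (-(Complex.I * k * t)) • f ((r:ℂ) * Complex.exp (Complex.I * t))‖
      ≤ 1 * |2 * Real.pi - 0| := by
    apply intervalIntegral.norm_integral_le_of_norm_le_const
    intro t _
    rw [norm_smul]
    have := hb _ (mem_closedAnnulus_of r hr1 hre t)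
    calc ‖Complex.exp (-(Complex.I * k * t))‖ * ‖f ((r:ℂ) * Complex.exp (Complex.I * t))‖
        ≤ 1 * 1 := by
          apply mul_le_mul _ this (norm_nonneg _) zero_le_one
          rw [abs_exp_neg_I_int]
      _ = 1 := one_mul 1
  rw [h1, h2]
  have hπ : (0:ℝ) < 2 * Real.pi := by positivity
  calc (2 * Real.pi)⁻¹ * (r ^ (-k) *
        ‖∫ t in (0:ℝ)..(2*Real.pi),
          Complex.exp (-(Complex.I * k * t)) • f ((r:ℂ) * Complex.exp (Complex.I * t))‖)
      ≤ (2 * Real.pi)⁻¹ * (r ^ (-k) * (1 * |2 * Real.pi - 0|)) := by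
        apply mul_le_mul_of_nonneg_left _ (by positivity)
        exact mul_le_mul_of_nonneg_left h3 (by positivity)
    _ = r ^ (-k) := by
        rw [sub_zero, abs_of_pos hπ]
        field_simp

lemma exp_zpow_real (x : ℝ) (k : ℤ) : Real.exp x ^ k = Real.exp (x * k) := by
  rw [← Real.rpow_intCast, Real.rpow_def_of_pos (Real.exp_pos x), Real.log_exp]

lemma hasSum_laurent (θ : ℝ) (hθ0 : 0 < θ) (hθ1 : θ < 1) (f : ℂ → ℂ)
    (hc : ContinuousOn f closedAnnulus) (hd : DifferentiableOn ℂ f openAnnulus)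
    (hb : ∀ z ∈ closedAnnulus, ‖f z‖ ≤ 1) :
    HasSum (fun k : ℤ => ((Real.exp (θ * k) : ℝ) : ℂ) • fourierLaurent f k)
      (f ((Real.exp θ : ℝ) : ℂ)) := by
  haveI : Fact (0 < 2 * Real.pi) := ⟨by positivity⟩
  set ρ : ℝ := Real.exp θ with hρ
  have hρ1 : 1 ≤ ρ := Real.one_le_exp hθ0.le
  have hρe : ρ ≤ Real.exp 1 := Real.exp_le_exp.2 hθ1.le
  have hρpos : (0:ℝ) < ρ := Real.exp_pos θ
  set p : ℝ → ℂ := fun t => f ((ρ:ℂ) * Complex.exp (Complex.I * t)) with hp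
  have hper : Function.Periodic p (2 * Real.pi) := by
    intro t
    simp only [hp]
    congr 2
    push_cast
    rw [mul_add, Complex.exp_add]
    have : Complex.exp (Complex.I * (2 * Real.pi)) = 1 := by
      rw [mul_comm]
      exact_mod_cast Complex.exp_two_pi_mul_I
    rw [this, mul_one]
  have hpc : Continuous p := by
    apply hc.comp_continuous
    · continuity
    · intro t
      exact mem_closedAnnulus_of ρ hρ1 hρe t
  set G : C(AddCircle (2 * Real.pi), ℂ) := ⟨hper.lift, hpc.quotient_liftOn' _⟩ with hG
  have hGcoe : ∀ t : ℝ, G (↑t) = p t := fun t => hper.lift_coe t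
  have coeff : ∀ k : ℤ, fourierCoeff (⇑G) k
      = ((Real.exp (θ * k) : ℝ) : ℂ) • fourierLaurent f k := by
    intro k
    rw [fourierCoeff_eq_intervalIntegral (⇑G) k 0]
    have hint : (∫ x in (0:ℝ)..(0 + 2 * Real.pi), fourier (-k) (↑x : AddCircle (2 * Real.pi)) • G ↑x)
        = ∫ t in (0:ℝ)..(2 * Real.pi), Complex.exp (-(Complex.I * k * t)) • p t := by
      rw [zero_add]
      refine intervalIntegral.integral_congr fun t _ => ?_
      rw [hGcoe t, fourier_coe_apply]
      congr 2
      have hπ : (Real.pi : ℂ) ≠ 0 := Complex.ofReal_ne_zero.2 Real.pi_ne_zero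
      push_cast
      field_simp
    rw [hint]
    have hshift := contour_shift f hc hd hρ1 hρe k
    -- hshift : ∫_1 = ρ^(-k) • ∫_ρ
    have hρk : ((ρ:ℂ)) ^ (k:ℤ) ≠ 0 := zpow_ne_zero _ (Complex.ofReal_ne_zero.2 hρpos.ne')
    have h2 : (∫ t in (0:ℝ)..(2 * Real.pi), Complex.exp (-(Complex.I * k * t)) • p t)
        = ((ρ:ℂ) ^ (k:ℤ)) • ∫ t in (0:ℝ)..(2 * Real.pi),
            Complex.exp (-(Complex.I * k * t)) • f (Complex.exp (Complex.I * t)) := by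
      rw [hshift, smul_smul, ← zpow_add₀ (Complex.ofReal_ne_zero.2 hρpos.ne')]
      simp
      rfl
    have hzp : ((ρ:ℂ)) ^ (k:ℤ) = ((Real.exp (θ * k) : ℝ) : ℂ) := by
      rw [hρ]
      push_cast
      rw [← Complex.exp_int_mul]
      congr 1
      ring
    rw [h2, fourierLaurent, hzp, Complex.real_smul, smul_eq_mul, smul_eq_mul, smul_eq_mul]
    push_cast
    ring
  have hmaj : ∀ k : ℤ, ‖((Real.exp (θ * k) : ℝ) : ℂ) • fourierLaurent f k‖
      ≤ Real.exp (-(min θ (1 - θ))) ^ (k.natAbs) := by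
    intro k
    rw [norm_smul, Complex.norm_real, Real.norm_eq_abs, abs_of_pos (Real.exp_pos _),
      ← Real.exp_nat_mul]
    rcases le_or_gt 0 k with hk | hk
    · have h1 : ‖fourierLaurent f k‖ ≤ Real.exp 1 ^ (-k) :=
        norm_fourierLaurent_le f hc hd hb (Real.one_le_exp zero_le_one) le_rfl k
      rw [exp_zpow_real] at h1
      push_cast at h1
      calc Real.exp (θ * k) * ‖fourierLaurent f k‖
          ≤ Real.exp (θ * k) * Real.exp (1 * (-(k:ℝ))) :=
            mul_le_mul_of_nonneg_left h1 (Real.exp_pos _).le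
        _ = Real.exp (θ * k + 1 * (-(k:ℝ))) := by rw [← Real.exp_add]
        _ ≤ Real.exp ((k.natAbs : ℝ) * -(min θ (1 - θ))) := by
            apply Real.exp_le_exp.2
            have hna : (k.natAbs : ℝ) = (k : ℝ) := by
              rw [Nat.cast_natAbs]
              exact_mod_cast abs_of_nonneg hk
            rw [hna]
            have hk' : (0:ℝ) ≤ (k:ℝ) := by exact_mod_cast hk
            nlinarith [min_le_right θ (1 - θ)]
    · have h1 : ‖fourierLaurent f k‖ ≤ (1:ℝ) ^ (-k) :=
        norm_fourierLaurent_le f hc hd hb le_rfl (Real.one_le_exp zero_le_one) k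
      rw [one_zpow] at h1
      calc Real.exp (θ * k) * ‖fourierLaurent f k‖
          ≤ Real.exp (θ * k) * 1 := mul_le_mul_of_nonneg_left h1 (Real.exp_pos _).le
        _ = Real.exp (θ * k) := mul_one _
        _ ≤ Real.exp ((k.natAbs : ℝ) * -(min θ (1 - θ))) := by
            apply Real.exp_le_exp.2
            have hna : (k.natAbs : ℝ) = -(k : ℝ) := by
              rw [Nat.cast_natAbs]
              exact_mod_cast abs_of_neg hk
            rw [hna]
            have hk' : (k : ℝ) < 0 := by exact_mod_cast hk
            nlinarith [min_le_left θ (1 - θ)]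
  have hδ : 0 < min θ (1 - θ) := lt_min hθ0 (by linarith)
  have hr0 : Real.exp (-(min θ (1 - θ))) < 1 := Real.exp_lt_one_iff.2 (by linarith)
  have hsummaj : Summable (fun k : ℤ => Real.exp (-(min θ (1 - θ))) ^ k.natAbs) := by
    apply Summable.of_nat_of_neg
    · simpa using summable_geometric_of_lt_one (Real.exp_pos _).le hr0
    · simpa [Int.natAbs_neg] using summable_geometric_of_lt_one (Real.exp_pos _).le hr0
  have hsum : Summable (fourierCoeff (⇑G)) := by
    apply Summable.of_norm_bounded hsummaj
    intro k
    rw [coeff k]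
    exact hmaj k
  have hps := has_pointwise_sum_fourier_series_of_summable hsum (0 : AddCircle (2 * Real.pi))
  simp only [fourier_eval_zero, smul_eq_mul, mul_one] at hps
  have hG0 : G (0 : AddCircle (2 * Real.pi)) = f ((Real.exp θ : ℝ) : ℂ) := by
    have h0 : (0 : AddCircle (2 * Real.pi)) = ((0:ℝ) : AddCircle (2 * Real.pi)) := by
      norm_num
    rw [h0, hGcoe 0]
    simp only [hp]
    rw [hρ]
    push_cast
    norm_num
  rw [hG0] at hps
  simp only [coeff] at hps
  exact hps

lemma mem_Icc_iff_natAbs (k : ℤ) (m : ℕ) :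
    k ∈ Finset.Icc (-(m:ℤ)) (m:ℤ) ↔ k.natAbs ≤ m := by
  rw [Finset.mem_Icc]
  omega

lemma main_c (θ : ℝ) (hθ0 : 0 < θ) (hθ1 : θ < 1) :
    ∃ C : ℝ, 0 ≤ C ∧ ∀ n : ℕ, 0 < n →
      ∀ f : ℂ → ℂ,
        ContinuousOn f closedAnnulus → DifferentiableOn ℂ f openAnnulus →
        (∀ z ∈ closedAnnulus, ‖f z‖ ≤ 1) →
        ‖f ((Real.exp θ : ℝ) : ℂ) -
            (∑ k ∈ Finset.Icc (-(n:ℤ)) (n:ℤ),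
              ((Real.exp (θ * k) : ℝ) : ℂ) • fourierLaurent f k) -
            ∑ k ∈ Finset.Icc (-(2 * (n:ℤ))) (2 * (n:ℤ)) \ Finset.Icc (-(n:ℤ)) (n:ℤ),
              (((2 - |(k:ℝ)| / (n:ℝ) : ℝ) : ℂ) * ((Real.exp (θ * k) : ℝ) : ℂ)) •
                fourierLaurent f k‖ ≤
          C * (Real.exp (-(n:ℝ) * (1 - θ)) + Real.exp (-(n:ℝ) * θ)) := by
  set δ : ℝ := min θ (1 - θ) with hδdef
  have hδ : 0 < δ := lt_min hθ0 (by linarith)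
  set r0 : ℝ := Real.exp (-δ) with hr0def
  have hr0pos : 0 < r0 := Real.exp_pos _
  have hr0lt : r0 < 1 := Real.exp_lt_one_iff.2 (by linarith)
  have h1r : (0:ℝ) < 1 - r0 := by linarith
  refine ⟨2 * (r0 * (1 - r0)⁻¹), by positivity, ?_⟩
  intro n hn f hc hd hb
  set M : ℝ := Real.exp (-(n:ℝ) * (1 - θ)) + Real.exp (-(n:ℝ) * θ) with hM
  have hMpos : 0 < M := by positivity
  set u : ℤ → ℂ := fun k => ((Real.exp (θ * k) : ℝ) : ℂ) • fourierLaurent f k with hu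
  have hsum : HasSum u (f ((Real.exp θ : ℝ) : ℂ)) := hasSum_laurent θ hθ0 hθ1 f hc hd hb
  -- key pointwise bound
  have hkey : ∀ k : ℤ, n < k.natAbs → ‖u k‖ ≤ M * r0 ^ (k.natAbs - n) := by
    intro k hk
    have hexp : r0 ^ (k.natAbs - n) = Real.exp (-δ * (k.natAbs - n : ℕ)) := by
      rw [hr0def, ← Real.exp_nat_mul]
      congr 1
      ring
    rcases le_or_gt 0 k with hpos | hneg
    · have h1 : ‖fourierLaurent f k‖ ≤ Real.exp 1 ^ (-k) :=
        norm_fourierLaurent_le f hc hd hb (Real.one_le_exp zero_le_one) le_rfl k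
      rw [exp_zpow_real] at h1
      push_cast at h1
      have hna : (k.natAbs : ℝ) = (k : ℝ) := by
        rw [Nat.cast_natAbs]
        exact_mod_cast abs_of_nonneg hpos
      have hub : ‖u k‖ ≤ Real.exp (-(1-θ) * (k:ℝ)) := by
        rw [hu]
        simp only [norm_smul, Complex.norm_real, Real.norm_eq_abs,
          abs_of_pos (Real.exp_pos _)]
        calc Real.exp (θ * k) * ‖fourierLaurent f k‖
            ≤ Real.exp (θ * k) * Real.exp (1 * (-(k:ℝ))) :=
              mul_le_mul_of_nonneg_left h1 (Real.exp_pos _).le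
          _ = Real.exp (-(1-θ) * (k:ℝ)) := by rw [← Real.exp_add]; ring_nf
      refine hub.trans ?_
      rw [hexp]
      have hle : Real.exp (-(1-θ) * (k:ℝ))
          ≤ Real.exp (-(n:ℝ) * (1 - θ)) * Real.exp (-δ * (k.natAbs - n : ℕ)) := by
        rw [← Real.exp_add]
        apply Real.exp_le_exp.2
        have hcast : ((k.natAbs - n : ℕ) : ℝ) = (k.natAbs : ℝ) - n := by
          have : n ≤ k.natAbs := hk.le
          push_cast [Nat.cast_sub this]
          ring
        rw [hcast, hna]
        have hδθ : δ ≤ 1 - θ := min_le_right _ _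
        have hkn : (n:ℝ) ≤ (k:ℝ) := by rw [← hna]; exact_mod_cast hk.le
        nlinarith
      refine hle.trans ?_
      have : Real.exp (-(n:ℝ) * (1 - θ)) ≤ M := by
        rw [hM]; nlinarith [Real.exp_pos (-(n:ℝ) * θ)]
      exact mul_le_mul_of_nonneg_right this (Real.exp_pos _).le
    · have h1 : ‖fourierLaurent f k‖ ≤ (1:ℝ) ^ (-k) :=
        norm_fourierLaurent_le f hc hd hb le_rfl (Real.one_le_exp zero_le_one) k
      rw [one_zpow] at h1
      have hna : (k.natAbs : ℝ) = -(k : ℝ) := by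
        rw [Nat.cast_natAbs]
        exact_mod_cast abs_of_neg hneg
      have hub : ‖u k‖ ≤ Real.exp (θ * (k:ℝ)) := by
        rw [hu]
        simp only [norm_smul, Complex.norm_real, Real.norm_eq_abs,
          abs_of_pos (Real.exp_pos _)]
        calc Real.exp (θ * k) * ‖fourierLaurent f k‖
            ≤ Real.exp (θ * k) * 1 := mul_le_mul_of_nonneg_left h1 (Real.exp_pos _).le
          _ = Real.exp (θ * (k:ℝ)) := mul_one _
      refine hub.trans ?_
      rw [hexp]
      have hle : Real.exp (θ * (k:ℝ))
          ≤ Real.exp (-(n:ℝ) * θ) * Real.exp (-δ * (k.natAbs - n : ℕ)) := by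
        rw [← Real.exp_add]
        apply Real.exp_le_exp.2
        have hcast : ((k.natAbs - n : ℕ) : ℝ) = (k.natAbs : ℝ) - n := by
          have : n ≤ k.natAbs := hk.le
          push_cast [Nat.cast_sub this]
          ring
        rw [hcast, hna]
        have hδθ : δ ≤ θ := min_le_left _ _
        have hkn : (n:ℝ) ≤ -(k:ℝ) := by rw [← hna]; exact_mod_cast hk.le
        nlinarith
      refine hle.trans ?_
      have : Real.exp (-(n:ℝ) * θ) ≤ M := by
        rw [hM]; nlinarith [Real.exp_pos (-(n:ℝ) * (1 - θ))]
      exact mul_le_mul_of_nonneg_right this (Real.exp_pos _).le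
  set S1 := Finset.Icc (-(n:ℤ)) (n:ℤ) with hS1
  set S2 := Finset.Icc (-(2*(n:ℤ))) (2*(n:ℤ)) with hS2
  have hS1sub : S1 ⊆ S2 := by
    intro k hk
    rw [hS1, Finset.mem_Icc] at hk
    rw [hS2, Finset.mem_Icc]
    omega
  set g : ℤ → ℂ := fun k => if k ∈ S1 then u k
      else if k ∈ S2 then (((2 - |(k:ℝ)| / (n:ℝ) : ℝ) : ℂ)) * u k else 0 with hg
  have hgsum : HasSum g (∑ k ∈ S2, g k) := by
    apply hasSum_sum_of_ne_finset_zero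
    intro k hk
    have hk1 : k ∉ S1 := fun h => hk (hS1sub h)
    simp [hg, hk, hk1]
  have hw : HasSum (fun k => u k - g k)
      (f ((Real.exp θ : ℝ) : ℂ) - ∑ k ∈ S2, g k) := hsum.sub hgsum
  have htarget : f ((Real.exp θ : ℝ) : ℂ) - (∑ k ∈ S1, u k) -
      (∑ k ∈ S2 \ S1, (((2 - |(k:ℝ)| / (n:ℝ) : ℝ) : ℂ) * ((Real.exp (θ * k) : ℝ) : ℂ)) •
        fourierLaurent f k)
      = f ((Real.exp θ : ℝ) : ℂ) - ∑ k ∈ S2, g k := by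
    rw [sub_sub]
    congr 1
    rw [← Finset.sum_sdiff hS1sub, add_comm]
    congr 1
    · apply Finset.sum_congr rfl
      intro k hk
      have hk2 := (Finset.mem_sdiff.mp hk).1
      have hk1 := (Finset.mem_sdiff.mp hk).2
      simp only [hg, if_neg hk1, if_pos hk2, hu]
      rw [smul_eq_mul, smul_eq_mul]
      ring
    · apply Finset.sum_congr rfl
      intro k hk
      simp [hg, hk]
  rw [htarget]
  set Gm : ℤ → ℝ := fun k => if n < k.natAbs then M * r0 ^ (k.natAbs - n) else 0 with hGmdef
  have hwb : ∀ k : ℤ, ‖u k - g k‖ ≤ Gm k := by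
    intro k
    by_cases h1 : k ∈ S1
    · have hna : k.natAbs ≤ n := (mem_Icc_iff_natAbs k n).1 h1
      simp [hg, if_pos h1, hGmdef, Nat.not_lt.2 hna]
    · have hna : n < k.natAbs := Nat.lt_of_not_le (fun h => h1 ((mem_Icc_iff_natAbs k n).2 h))
      have hGmk : Gm k = M * r0 ^ (k.natAbs - n) := by rw [hGmdef]; exact if_pos hna
      by_cases h2 : k ∈ S2
      · have hna2 : k.natAbs ≤ 2 * n := by
          have := (mem_Icc_iff_natAbs k (2*n)).1 (by
            convert h2 using 2 <;> push_cast <;> ring)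
          exact this
        simp only [hg, if_neg h1, if_pos h2]
        have : u k - ((2 - |(k:ℝ)| / (n:ℝ) : ℝ) : ℂ) * u k
            = ((1 - (2 - |(k:ℝ)| / (n:ℝ)) : ℝ) : ℂ) * u k := by
          push_cast
          ring
        rw [this, norm_mul]
        have habs : ‖((1 - (2 - |(k:ℝ)| / (n:ℝ)) : ℝ) : ℂ)‖ ≤ 1 := by
          rw [Complex.norm_real, Real.norm_eq_abs, abs_le]
          have hk1 : (n:ℝ) < |(k:ℝ)| := by
            rw [← Int.cast_abs, Int.abs_eq_natAbs]
            exact_mod_cast hna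
          have hk2 : |(k:ℝ)| ≤ 2 * n := by
            rw [← Int.cast_abs, Int.abs_eq_natAbs]
            exact_mod_cast hna2
          have hnpos : (0:ℝ) < n := by exact_mod_cast hn
          have hx1 : 1 < |(k:ℝ)| / n := (one_lt_div hnpos).2 hk1
          have hx2 : |(k:ℝ)| / n ≤ 2 := (div_le_iff₀ hnpos).2 (by linarith)
          constructor <;> linarith
        calc ‖((1 - (2 - |(k:ℝ)| / (n:ℝ)) : ℝ) : ℂ)‖ * ‖u k‖
            ≤ 1 * (M * r0 ^ (k.natAbs - n)) := by
              apply mul_le_mul habs (hkey k hna) (norm_nonneg _) zero_le_one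
          _ = Gm k := by rw [one_mul, hGmk]
      · simp only [hg, if_neg h1, if_neg h2, sub_zero]
        rw [hGmk]
        exact hkey k hna
  have hGm1 : HasSum (fun m : ℕ => Gm (m:ℤ)) (M * (r0 * (1 - r0)⁻¹)) := by
    have hgeo : HasSum (fun m : ℕ => (M * r0) * r0 ^ m) ((M * r0) * (1 - r0)⁻¹) :=
      (hasSum_geometric_of_lt_one hr0pos.le hr0lt).mul_left _
    have heq : (fun m : ℕ => Gm (((m + (n+1) : ℕ)):ℤ)) = fun m : ℕ => (M * r0) * r0 ^ m := by
      funext m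
      simp only [hGmdef, Int.natAbs_natCast]
      rw [if_pos (by omega)]
      have h3 : m + (n+1) - n = m + 1 := by omega
      rw [h3, pow_succ]
      ring
    have h2 := (hasSum_nat_add_iff (f := fun m : ℕ => Gm (m:ℤ)) (n+1)).1 (by
      rw [show (fun m : ℕ => Gm ((↑(m + (n+1)) : ℤ))) = fun m : ℕ => (M * r0) * r0 ^ m from heq]
      exact hgeo)
    have hzero : ∑ i ∈ Finset.range (n+1), Gm (i:ℤ) = 0 := by
      apply Finset.sum_eq_zero
      intro i hi
      rw [Finset.mem_range] at hi
      simp only [hGmdef, Int.natAbs_natCast]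
      rw [if_neg (by omega)]
    rw [hzero, add_zero] at h2
    rw [show M * (r0 * (1 - r0)⁻¹) = M * r0 * (1 - r0)⁻¹ by ring]
    exact h2
  have hGm2 : HasSum (fun m : ℕ => Gm (-(m+1):ℤ)) (M * (r0 * (1 - r0)⁻¹)) := by
    have hgeo : HasSum (fun m : ℕ => (M * r0) * r0 ^ m) ((M * r0) * (1 - r0)⁻¹) :=
      (hasSum_geometric_of_lt_one hr0pos.le hr0lt).mul_left _
    have hna : ∀ m : ℕ, ((-(m+1):ℤ)).natAbs = m + 1 := by
      intro m
      rw [Int.natAbs_neg]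
      exact_mod_cast Int.natAbs_natCast (m+1)
    have heq : (fun m : ℕ => Gm (-((m + n : ℕ) + 1):ℤ)) = fun m : ℕ => (M * r0) * r0 ^ m := by
      funext m
      simp only [hGmdef]
      rw [show (-(((m + n : ℕ)) + 1):ℤ) = -(((m + n : ℕ):ℤ)+1) by push_cast; ring]
      have h4 : ((-(((m + n : ℕ):ℤ)+1)).natAbs) = m + n + 1 := by
        rw [Int.natAbs_neg]
        omega
      rw [h4, if_pos (by omega)]
      have h3 : m + n + 1 - n = m + 1 := by omega
      rw [h3, pow_succ]
      ring
    have h2 := (hasSum_nat_add_iff (f := fun m : ℕ => Gm (-(m+1):ℤ)) n).1 (by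
      rw [show (fun m : ℕ => Gm (-((↑(m + n) : ℤ)+1))) = fun m : ℕ => (M * r0) * r0 ^ m from heq]
      exact hgeo)
    have hzero : ∑ i ∈ Finset.range n, Gm (-(i+1):ℤ) = 0 := by
      apply Finset.sum_eq_zero
      intro i hi
      rw [Finset.mem_range] at hi
      simp only [hGmdef]
      have h4 : ((-((i:ℤ)+1)).natAbs) = i + 1 := by
        rw [Int.natAbs_neg]
        omega
      rw [h4, if_neg (by omega)]
    rw [hzero, add_zero] at h2
    rw [show M * (r0 * (1 - r0)⁻¹) = M * r0 * (1 - r0)⁻¹ by ring]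
    exact h2
  have hGm : HasSum Gm (2 * (r0 * (1 - r0)⁻¹) * M) := by
    have h := HasSum.of_nat_of_neg_add_one hGm1 hGm2
    convert h using 1
    ring
  have hsn : Summable (fun k : ℤ => ‖u k - g k‖) :=
    Summable.of_nonneg_of_le (fun _ => norm_nonneg _) hwb hGm.summable
  calc ‖f ((Real.exp θ : ℝ) : ℂ) - ∑ k ∈ S2, g k‖
      = ‖∑' k : ℤ, (u k - g k)‖ := by rw [hw.tsum_eq]
    _ ≤ ∑' k : ℤ, ‖u k - g k‖ := norm_tsum_le_tsum_norm hsn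
    _ ≤ ∑' k : ℤ, Gm k := Summable.tsum_le_tsum hwb hsn hGm.summable
    _ = 2 * (r0 * (1 - r0)⁻¹) * M := hGm.tsum_eq
    _ = 2 * (r0 * (1 - r0)⁻¹) * (Real.exp (-(n:ℝ) * (1 - θ)) + Real.exp (-(n:ℝ) * θ)) := by
        rw [hM]

lemma exp_I_mem_closedAnnulus (t : ℝ) : Complex.exp (Complex.I * t) ∈ closedAnnulus := by
  constructor
  · rw [abs_exp_I_mul]
  · rw [abs_exp_I_mul]
    exact Real.one_le_exp zero_le_one

lemma integrand_integrable {E : Type*} [NormedAddCommGroup E] [NormedSpace ℂ E]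
    (f : ℂ → E) (hc : ContinuousOn f closedAnnulus) (k : ℤ) :
    IntervalIntegrable
      (fun t : ℝ => Complex.exp (-(Complex.I * k * t)) • f (Complex.exp (Complex.I * t)))
      MeasureTheory.volume 0 (2 * Real.pi) := by
  apply Continuous.intervalIntegrable
  apply Continuous.smul
  · exact Complex.continuous_exp.comp (by continuity)
  · exact hc.comp_continuous (Complex.continuous_exp.comp (by continuity))
      (fun t => exp_I_mem_closedAnnulus t)

lemma fourierLaurent_comp_clm {E : Type*} [NormedAddCommGroup E] [NormedSpace ℂ E]
    [CompleteSpace E] (f : ℂ → E) (hc : ContinuousOn f closedAnnulus) (ψ : E →L[ℂ] ℂ) (k : ℤ) :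
    fourierLaurent (fun z => ψ (f z)) k = ψ (fourierLaurent f k) := by
  rw [fourierLaurent, fourierLaurent, ψ.map_smul]
  congr 1
  rw [← ContinuousLinearMap.intervalIntegral_comp_comm ψ (integrand_integrable f hc k)]
  refine intervalIntegral.integral_congr fun t _ => ?_
  rw [ψ.map_smul]

universe u

theorem stmt11 (θ : ℝ) (hθ0 : 0 < θ) (hθ1 : θ < 1) :
    ∃ C : ℝ, ∀ (E : Type u) [NormedAddCommGroup E] [NormedSpace ℂ E] [CompleteSpace E],
      ∀ n : ℕ, 0 < n →
        ∀ f : ℂ → E,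
          ContinuousOn f closedAnnulus → DifferentiableOn ℂ f openAnnulus →
          (∀ z ∈ closedAnnulus, ‖f z‖ ≤ 1) →
          ‖f ((Real.exp θ : ℝ) : ℂ) -
              (∑ k ∈ Finset.Icc (-(n:ℤ)) (n:ℤ),
                ((Real.exp (θ * k) : ℝ) : ℂ) • fourierLaurent f k) -
              ∑ k ∈ Finset.Icc (-(2 * (n:ℤ))) (2 * (n:ℤ)) \ Finset.Icc (-(n:ℤ)) (n:ℤ),
                (((2 - |(k:ℝ)| / (n:ℝ) : ℝ) : ℂ) * ((Real.exp (θ * k) : ℝ) : ℂ)) •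
                  fourierLaurent f k‖ ≤
            C * (Real.exp (-(n:ℝ) * (1 - θ)) + Real.exp (-(n:ℝ) * θ)) := by
  obtain ⟨C, hC0, hC⟩ := main_c θ hθ0 hθ1
  refine ⟨C, ?_⟩
  intro E _ _ _ n hn f hc hd hb
  set M : ℝ := Real.exp (-(n:ℝ) * (1 - θ)) + Real.exp (-(n:ℝ) * θ) with hM
  have hM0 : 0 ≤ C * M := mul_nonneg hC0 (by positivity)
  apply NormedSpace.norm_le_dual_bound ℂ _ hM0
  intro φ
  by_cases hφ : φ = 0
  · simp [hφ]
  · have hφn : 0 < ‖φ‖ := norm_pos_iff.2 hφ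
    set ψ : E →L[ℂ] ℂ := ((‖φ‖ : ℂ))⁻¹ • φ with hψdef
    have hψnorm : ‖ψ‖ ≤ 1 := by
      apply ContinuousLinearMap.opNorm_le_bound _ zero_le_one
      intro x
      rw [hψdef]
      simp only [ContinuousLinearMap.coe_smul', Pi.smul_apply, smul_eq_mul]
      rw [norm_mul, norm_inv, Complex.norm_real, Real.norm_eq_abs, abs_of_pos hφn]
      calc ‖φ‖⁻¹ * ‖φ x‖ ≤ ‖φ‖⁻¹ * (‖φ‖ * ‖x‖) :=
            mul_le_mul_of_nonneg_left (φ.le_opNorm x) (by positivity)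
        _ = 1 * ‖x‖ := by field_simp
    set g : ℂ → ℂ := fun z => ψ (f z) with hgdef
    have hgc : ContinuousOn g closedAnnulus := ψ.continuous.comp_continuousOn hc
    have hgd : DifferentiableOn ℂ g openAnnulus := fun z hz =>
      (ψ.differentiableAt).comp_differentiableWithinAt z (hd z hz)
    have hgb : ∀ z ∈ closedAnnulus, ‖g z‖ ≤ 1 := by
      intro z hz
      calc ‖ψ (f z)‖ ≤ ‖ψ‖ * ‖f z‖ := ψ.le_opNorm _
        _ ≤ 1 * 1 := mul_le_mul hψnorm (hb z hz) (norm_nonneg _) zero_le_one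
        _ = 1 := one_mul 1
    have hest := hC n hn g hgc hgd hgb
    -- express the evaluated functional
    have hψv : ψ (f ((Real.exp θ : ℝ) : ℂ) -
        (∑ k ∈ Finset.Icc (-(n:ℤ)) (n:ℤ),
          ((Real.exp (θ * k) : ℝ) : ℂ) • fourierLaurent f k) -
        ∑ k ∈ Finset.Icc (-(2 * (n:ℤ))) (2 * (n:ℤ)) \ Finset.Icc (-(n:ℤ)) (n:ℤ),
          (((2 - |(k:ℝ)| / (n:ℝ) : ℝ) : ℂ) * ((Real.exp (θ * k) : ℝ) : ℂ)) •
            fourierLaurent f k)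
        = g ((Real.exp θ : ℝ) : ℂ) -
        (∑ k ∈ Finset.Icc (-(n:ℤ)) (n:ℤ),
          ((Real.exp (θ * k) : ℝ) : ℂ) • fourierLaurent g k) -
        ∑ k ∈ Finset.Icc (-(2 * (n:ℤ))) (2 * (n:ℤ)) \ Finset.Icc (-(n:ℤ)) (n:ℤ),
          (((2 - |(k:ℝ)| / (n:ℝ) : ℝ) : ℂ) * ((Real.exp (θ * k) : ℝ) : ℂ)) •
            fourierLaurent g k := by
      rw [map_sub, map_sub, map_sum, map_sum]
      congr 1
      congr 1
      · apply Finset.sum_congr rfl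
        intro k _
        rw [ψ.map_smul, fourierLaurent_comp_clm f hc ψ k]
      · apply Finset.sum_congr rfl
        intro k _
        rw [ψ.map_smul, fourierLaurent_comp_clm f hc ψ k]
    have hφψ : ∀ x : E, φ x = (‖φ‖ : ℂ) * ψ x := by
      intro x
      rw [hψdef]
      simp only [ContinuousLinearMap.coe_smul', Pi.smul_apply, smul_eq_mul]
      rw [← mul_assoc, mul_inv_cancel₀ (by exact_mod_cast hφn.ne'), one_mul]
    rw [hφψ, norm_mul, Complex.norm_real, Real.norm_eq_abs, abs_of_pos hφn, hψv]
    calc ‖φ‖ * ‖g ((Real.exp θ : ℝ) : ℂ) -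
        (∑ k ∈ Finset.Icc (-(n:ℤ)) (n:ℤ),
          ((Real.exp (θ * k) : ℝ) : ℂ) • fourierLaurent g k) -
        ∑ k ∈ Finset.Icc (-(2 * (n:ℤ))) (2 * (n:ℤ)) \ Finset.Icc (-(n:ℤ)) (n:ℤ),
          (((2 - |(k:ℝ)| / (n:ℝ) : ℝ) : ℂ) * ((Real.exp (θ * k) : ℝ) : ℂ)) •
            fourierLaurent g k‖
        ≤ ‖φ‖ * (C * M) := mul_le_mul_of_nonneg_left hest hφn.le
      _ = C * M * ‖φ‖ := by ring
end

section
/- For each θ ∈ (0,1) there is a constant C = C(θ) such that for every complex Banach space E and every function f : Ā → E which is continuous on Ā and analytic on Ω, one has ‖f(e^θ)‖_E ≤ C (∫₀^{2π} ‖f(e^{it})‖_E dt/2π)^{1−θ} (∫₀^{2π} ‖f(e^{1+it})‖_E dt/2π)^{θ}. -/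
open MeasureTheory Filter Topology

universe u

open Set Metric Complex

/-- Cauchy integral formula on an annulus. -/
theorem annulusCauchy {E : Type u} [NormedAddCommGroup E] [NormedSpace ℂ E] [CompleteSpace E]
    {f : ℂ → E} {r R : ℝ} {w : ℂ} (hr : 0 < r) (hwr : r < ‖w‖)
    (hwR : ‖w‖ < R)
    (hc : ContinuousOn f (closedBall 0 R \ ball 0 r))
    (hd : ∀ z ∈ ball (0:ℂ) R \ closedBall 0 r, DifferentiableAt ℂ f z) :
    (∮ z in C(0, R), (z - w)⁻¹ • f z) - (∮ z in C(0, r), (z - w)⁻¹ • f z)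
      = (2 * Real.pi * Complex.I : ℂ) • f w := by
  have hrR : r ≤ R := (hwr.trans hwR).le
  have hR : 0 < R := hr.trans_le hrR
  have hw : w ∈ ball (0:ℂ) R \ closedBall 0 r := by
    simp only [mem_diff, mem_ball_zero_iff, mem_closedBall_zero_iff, not_le]
    exact ⟨hwR, hwr⟩
  have hmem : (ball (0:ℂ) R \ closedBall 0 r) ∈ 𝓝 w :=
    (isOpen_ball.sdiff isClosed_closedBall).mem_nhds hw
  have hnhds : (closedBall (0:ℂ) R \ ball 0 r) ∈ 𝓝 w :=
    mem_of_superset hmem (diff_subset_diff ball_subset_closedBall ball_subset_closedBall)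
  set F : ℂ → E := dslope f w with hF
  have hdw : DifferentiableAt ℂ f w := hd w hw
  have hcF : ContinuousOn F (closedBall 0 R \ ball 0 r) :=
    (continuousOn_dslope hnhds).2 ⟨hc, hdw⟩
  have hdF : ∀ z ∈ (ball (0:ℂ) R \ closedBall 0 r) \ {w}, DifferentiableAt ℂ F z := by
    intro z hz
    have hzw : z ≠ w := by simpa using hz.2
    exact (differentiableAt_dslope_of_ne hzw).2 (hd z hz.1)
  have HI : (∮ z in C(0, R), F z) = ∮ z in C(0, r), F z :=
    circleIntegral_eq_of_differentiable_on_annulus_off_countable hr hrR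
      (countable_singleton w) hcF hdF
  have hsubR : sphere (0:ℂ) R ⊆ closedBall 0 R \ ball 0 r := by
    intro z hz
    rw [mem_sphere_zero_iff_norm] at hz
    simp only [mem_diff, mem_closedBall_zero_iff, mem_ball_zero_iff, not_lt, hz]
    exact ⟨le_rfl, hrR⟩
  have hsubr : sphere (0:ℂ) r ⊆ closedBall 0 R \ ball 0 r := by
    intro z hz
    rw [mem_sphere_zero_iff_norm] at hz
    simp only [mem_diff, mem_closedBall_zero_iff, mem_ball_zero_iff, not_lt, hz]
    exact ⟨hrR, le_rfl⟩
  have hneR : ∀ z ∈ sphere (0:ℂ) R, z ≠ w := by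
    intro z hz h
    rw [mem_sphere_zero_iff_norm] at hz
    rw [h] at hz
    exact absurd hz (ne_of_lt hwR)
  have hner : ∀ z ∈ sphere (0:ℂ) r, z ≠ w := by
    intro z hz h
    rw [mem_sphere_zero_iff_norm] at hz
    rw [h] at hz
    exact absurd hz.symm (ne_of_lt hwr)
  have hFeqR : EqOn F (fun z => (z - w)⁻¹ • f z - (z - w)⁻¹ • f w) (sphere (0:ℂ) R) := by
    intro z hz
    calc F z = (z - w)⁻¹ • (f z - f w) := Function.update_of_ne (hneR z hz) _ _
    _ = (z - w)⁻¹ • f z - (z - w)⁻¹ • f w := smul_sub _ _ _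
  have hFeqr : EqOn F (fun z => (z - w)⁻¹ • f z - (z - w)⁻¹ • f w) (sphere (0:ℂ) r) := by
    intro z hz
    calc F z = (z - w)⁻¹ • (f z - f w) := Function.update_of_ne (hner z hz) _ _
    _ = (z - w)⁻¹ • f z - (z - w)⁻¹ • f w := smul_sub _ _ _
  have hcR' : ContinuousOn (fun z => (z - w)⁻¹) (sphere (0:ℂ) R) :=
    (continuousOn_id.sub continuousOn_const).inv₀ fun z hz => sub_ne_zero.2 (hneR z hz)
  have hcr' : ContinuousOn (fun z => (z - w)⁻¹) (sphere (0:ℂ) r) :=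
    (continuousOn_id.sub continuousOn_const).inv₀ fun z hz => sub_ne_zero.2 (hner z hz)
  have hiR1 : CircleIntegrable (fun z => (z - w)⁻¹ • f z) 0 R :=
    (hcR'.smul (hc.mono hsubR)).circleIntegrable hR.le
  have hiR2 : CircleIntegrable (fun z => (z - w)⁻¹ • f w) 0 R :=
    (hcR'.smul continuousOn_const).circleIntegrable hR.le
  have hir1 : CircleIntegrable (fun z => (z - w)⁻¹ • f z) 0 r :=
    (hcr'.smul (hc.mono hsubr)).circleIntegrable hr.le
  have hir2 : CircleIntegrable (fun z => (z - w)⁻¹ • f w) 0 r :=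
    (hcr'.smul continuousOn_const).circleIntegrable hr.le
  have hIR : (∮ z in C(0, R), F z)
      = (∮ z in C(0, R), (z - w)⁻¹ • f z) - (2 * Real.pi * Complex.I : ℂ) • f w := by
    rw [circleIntegral.integral_congr hR.le hFeqR, circleIntegral.integral_sub hiR1 hiR2,
      circleIntegral.integral_smul_const,
      circleIntegral.integral_sub_inv_of_mem_ball (by simpa [mem_ball_zero_iff] using hwR)]
  have hzero : (∮ z in C(0, r), (z - w)⁻¹) = 0 := by
    apply circleIntegral_eq_zero_of_differentiable_on_off_countable hr.le countable_empty
    · apply ContinuousOn.inv₀ ((continuous_sub_right w).continuousOn)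
      intro z hz
      refine sub_ne_zero.2 fun h => ?_
      rw [mem_closedBall_zero_iff, h] at hz
      exact absurd hz (not_le.2 hwr)
    · intro z hz
      refine DifferentiableAt.inv (differentiableAt_id.sub (differentiableAt_const _)) ?_
      refine sub_ne_zero.2 fun h => ?_
      have hb := hz.1
      rw [mem_ball_zero_iff, h] at hb
      exact absurd (hb.trans hwr) (lt_irrefl _)
  have hIr : (∮ z in C(0, r), F z) = ∮ z in C(0, r), (z - w)⁻¹ • f z := by
    rw [circleIntegral.integral_congr hr.le hFeqr, circleIntegral.integral_sub hir1 hir2,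
      circleIntegral.integral_smul_const, hzero, zero_smul, sub_zero]
  rw [hIR, hIr] at HI
  rw [← HI]
  abel

theorem circleIntegral_norm_bound {E : Type u} [NormedAddCommGroup E] [NormedSpace ℂ E]
    {f : ℂ → E} {R d : ℝ} {w : ℂ} (hR : 0 ≤ R) (hd : 0 < d)
    (hdist : ∀ t : ℝ, d ≤ ‖circleMap 0 R t - w‖)
    (hcont : Continuous fun t : ℝ => f (circleMap 0 R t)) :
    ‖∮ z in C(0, R), (z - w)⁻¹ • f z‖
      ≤ (R / d) * ∫ t in (0:ℝ)..(2 * Real.pi), ‖f (circleMap 0 R t)‖ := by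
  have hne : ∀ t : ℝ, circleMap 0 R t - w ≠ 0 := fun t h => by
    have := hdist t
    rw [h] at this
    simp at this
    exact absurd (hd.trans_le this) (lt_irrefl _)
  have hcont1 : Continuous fun t : ℝ =>
      (circleMap 0 R t * Complex.I) • (circleMap 0 R t - w)⁻¹ • f (circleMap 0 R t) := by
    have : Continuous fun t : ℝ => (circleMap 0 R t - w)⁻¹ :=
      ((continuous_circleMap 0 R).sub continuous_const).inv₀ hne
    exact (((continuous_circleMap 0 R).mul continuous_const).smul (this.smul hcont))
  rw [circleIntegral]
  simp only [deriv_circleMap]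
  calc ‖∫ t in (0:ℝ)..(2 * Real.pi),
        (circleMap 0 R t * Complex.I) • (circleMap 0 R t - w)⁻¹ • f (circleMap 0 R t)‖
      ≤ ∫ t in (0:ℝ)..(2 * Real.pi),
        ‖(circleMap 0 R t * Complex.I) • (circleMap 0 R t - w)⁻¹ • f (circleMap 0 R t)‖ :=
        intervalIntegral.norm_integral_le_integral_norm Real.two_pi_pos.le
    _ ≤ ∫ t in (0:ℝ)..(2 * Real.pi), (R / d) * ‖f (circleMap 0 R t)‖ := by
        apply intervalIntegral.integral_mono_on Real.two_pi_pos.le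
        · exact hcont1.norm.intervalIntegrable _ _
        · exact (Continuous.intervalIntegrable (by continuity) _ _)
        · intro t _
          rw [norm_smul, norm_smul]
          have h1 : ‖circleMap 0 R t * Complex.I‖ = R := by
            simp [map_mul, norm_circleMap_zero, _root_.abs_of_nonneg hR]
          have h2 : ‖(circleMap 0 R t - w)⁻¹‖ ≤ d⁻¹ := by
            rw [norm_inv]
            exact inv_anti₀ hd (hdist t)
          rw [h1, div_eq_mul_inv, mul_assoc]
          exact mul_le_mul_of_nonneg_left
            (mul_le_mul_of_nonneg_right h2 (norm_nonneg _)) hR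
    _ = (R / d) * ∫ t in (0:ℝ)..(2 * Real.pi), ‖f (circleMap 0 R t)‖ :=
        intervalIntegral.integral_const_mul _ _

theorem opt_lemma {θ a b J₀ J₁ x : ℝ} (hθ0 : 0 < θ) (hθ1 : θ < 1) (ha : 0 < a) (hb : 0 < b)
    (h0 : 0 ≤ J₀) (h1 : 0 ≤ J₁) (hx : 0 ≤ x)
    (h : ∀ n : ℤ, x ≤ a * Real.exp (-(n * θ)) * J₀ + b * Real.exp (n * (1 - θ)) * J₁) :
    x ≤ (a * Real.exp θ + b) * J₀ ^ (1 - θ) * J₁ ^ θ := by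
  rcases h0.eq_or_lt with h0e | h0p
  · -- J₀ = 0 : let n → -∞
    have hx0 : x ≤ 0 := by
      have hlim : Tendsto (fun n : ℤ => a * Real.exp (-(n * θ)) * J₀
          + b * Real.exp (n * (1 - θ)) * J₁) atBot (𝓝 0) := by
      -- the first term is 0
        have h2 : Tendsto (fun n : ℤ => (n : ℝ) * (1 - θ)) atBot atBot :=
          (tendsto_intCast_atBot_iff.2 tendsto_id).atBot_mul_const (by linarith)
        have h3 : Tendsto (fun n : ℤ => Real.exp ((n : ℝ) * (1 - θ))) atBot (𝓝 0) :=
          Real.tendsto_exp_atBot.comp h2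
        have h4 : Tendsto (fun n : ℤ => b * Real.exp ((n : ℝ) * (1 - θ)) * J₁) atBot (𝓝 0) := by
          have := (h3.const_mul b).mul_const J₁
          simpa using this
        have h5 : (fun n : ℤ => a * Real.exp (-(n * θ)) * J₀ + b * Real.exp (n * (1 - θ)) * J₁)
            = fun n : ℤ => b * Real.exp (n * (1 - θ)) * J₁ := by
          funext n; rw [← h0e]; ring
        rw [h5]
        exact h4
      exact ge_of_tendsto hlim (Eventually.of_forall h)
    have : J₀ ^ (1 - θ) = 0 := by
      rw [← h0e]; exact Real.zero_rpow (by linarith)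
    rw [this]
    have : (a * Real.exp θ + b) * 0 * J₁ ^ θ = 0 := by ring
    rw [this]
    exact hx0
  rcases h1.eq_or_lt with h1e | h1p
  · -- J₁ = 0 : let n → +∞
    have hx0 : x ≤ 0 := by
      have hlim : Tendsto (fun n : ℤ => a * Real.exp (-(n * θ)) * J₀
          + b * Real.exp (n * (1 - θ)) * J₁) atTop (𝓝 0) := by
        have h2 : Tendsto (fun n : ℤ => -((n : ℝ) * θ)) atTop atBot := by
          have := (tendsto_intCast_atTop_atTop (R := ℝ)).atTop_mul_const hθ0
          exact tendsto_neg_atBot_iff.mpr this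
        have h3 : Tendsto (fun n : ℤ => Real.exp (-((n : ℝ) * θ))) atTop (𝓝 0) :=
          Real.tendsto_exp_atBot.comp h2
        have h4 : Tendsto (fun n : ℤ => a * Real.exp (-((n : ℝ) * θ)) * J₀) atTop (𝓝 0) := by
          have := (h3.const_mul a).mul_const J₀
          simpa using this
        have h5 : (fun n : ℤ => a * Real.exp (-(n * θ)) * J₀ + b * Real.exp (n * (1 - θ)) * J₁)
            = fun n : ℤ => a * Real.exp (-(n * θ)) * J₀ := by
          funext n; rw [← h1e]; ring
        rw [h5]
        exact h4
      exact ge_of_tendsto hlim (Eventually.of_forall h)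
    have : J₁ ^ θ = 0 := by rw [← h1e]; exact Real.zero_rpow (ne_of_gt hθ0)
    rw [this, mul_zero]
    exact hx0
  · -- both positive
    set u := Real.log J₀ with hu
    set v := Real.log J₁ with hv
    have hJ₀ : J₀ = Real.exp u := (Real.exp_log h0p).symm
    have hJ₁ : J₁ = Real.exp v := (Real.exp_log h1p).symm
    have hr0 : J₀ ^ (1 - θ) = Real.exp (u * (1 - θ)) := by
      rw [Real.rpow_def_of_pos h0p]
    have hr1 : J₁ ^ θ = Real.exp (v * θ) := by
      rw [Real.rpow_def_of_pos h1p]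
    set s := u - v with hs
    set n := ⌊s⌋ with hn
    have hn1 : (n : ℝ) ≤ s := Int.floor_le s
    have hn2 : s - 1 < n := by
      have := Int.lt_floor_add_one s
      linarith
    have key := h n
    set T := u * (1 - θ) + v * θ with hT
    have t1 : a * Real.exp (-(n * θ)) * J₀ ≤ a * (Real.exp θ * Real.exp T) := by
      rw [hJ₀]
      calc a * Real.exp (-(↑n * θ)) * Real.exp u = a * Real.exp (-(↑n * θ) + u) := by
            rw [Real.exp_add]; ring
        _ ≤ a * Real.exp (θ + T) := by
            refine mul_le_mul_of_nonneg_left (Real.exp_le_exp.2 ?_) ha.le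
            rw [hT, hs] at *
            nlinarith
        _ = a * (Real.exp θ * Real.exp T) := by rw [Real.exp_add]
    have t2 : b * Real.exp (n * (1 - θ)) * J₁ ≤ b * Real.exp T := by
      rw [hJ₁]
      calc b * Real.exp (↑n * (1 - θ)) * Real.exp v = b * Real.exp (↑n * (1 - θ) + v) := by
            rw [Real.exp_add]; ring
        _ ≤ b * Real.exp T := by
            refine mul_le_mul_of_nonneg_left (Real.exp_le_exp.2 ?_) hb.le
            rw [hT, hs] at *
            nlinarith
    calc x ≤ a * Real.exp (-(n * θ)) * J₀ + b * Real.exp (n * (1 - θ)) * J₁ := key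
      _ ≤ a * (Real.exp θ * Real.exp T) + b * Real.exp T := add_le_add t1 t2
      _ = (a * Real.exp θ + b) * Real.exp T := by ring
      _ = (a * Real.exp θ + b) * J₀ ^ (1 - θ) * J₁ ^ θ := by
          rw [hr0, hr1, hT, Real.exp_add]; ring

lemma exp_zpow' (x : ℝ) (n : ℤ) : Real.exp x ^ n = Real.exp (n * x) := by
  rw [← Real.rpow_intCast (Real.exp x) n, ← Real.exp_mul, mul_comm]

theorem stmt14 (θ : ℝ) (hθ0 : 0 < θ) (hθ1 : θ < 1) :
    ∃ C : ℝ, ∀ (E : Type u) [NormedAddCommGroup E] [NormedSpace ℂ E] [CompleteSpace E],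
      ∀ f : ℂ → E,
        ContinuousOn f closedAnnulus → DifferentiableOn ℂ f openAnnulus →
        ‖f ((Real.exp θ : ℝ) : ℂ)‖ ≤
          C * ((2 * Real.pi)⁻¹ *
                ∫ t in (0:ℝ)..(2 * Real.pi), ‖f (Complex.exp (Complex.I * t))‖) ^ (1 - θ) *
            ((2 * Real.pi)⁻¹ *
                ∫ t in (0:ℝ)..(2 * Real.pi), ‖f (Complex.exp (1 + Complex.I * t))‖) ^ θ := by
  set p := Real.exp θ with hp
  set e1 := Real.exp 1 with he1
  have hp1 : 1 < p := by
    rw [hp, show (1:ℝ) = Real.exp 0 from (Real.exp_zero).symm]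
    exact Real.exp_lt_exp.2 hθ0
  have hpe : p < e1 := Real.exp_lt_exp.2 hθ1
  have hp0 : 0 < p := lt_trans one_pos hp1
  have he10 : 0 < e1 := lt_trans hp0 hpe
  set a := (p - 1)⁻¹ with ha'
  set b := e1 * (e1 - p)⁻¹ with hb'
  have ha : 0 < a := inv_pos.2 (by linarith)
  have hb : 0 < b := mul_pos he10 (inv_pos.2 (by linarith))
  refine ⟨a * p + b, ?_⟩
  intro E _ _ _ f hc hdiff
  -- basic set identifications
  have hAnnEq : closedBall (0:ℂ) e1 \ ball 0 1 = closedAnnulus := by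
    ext z
    simp only [mem_diff, mem_closedBall_zero_iff, mem_ball_zero_iff, not_lt, closedAnnulus,
      mem_setOf_eq]
    tauto
  have hOpenEq : ball (0:ℂ) e1 \ closedBall 0 1 = openAnnulus := by
    ext z
    simp only [mem_diff, mem_ball_zero_iff, mem_closedBall_zero_iff, not_le, openAnnulus,
      mem_setOf_eq]
    tauto
  have hOpen : IsOpen openAnnulus := by
    rw [← hOpenEq]
    exact isOpen_ball.sdiff isClosed_closedBall
  -- boundary integrals of f
  set Φ1 : ℝ := ∫ t in (0:ℝ)..(2 * Real.pi), ‖f (circleMap 0 1 t)‖ with hΦ1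
  set Φe : ℝ := ∫ t in (0:ℝ)..(2 * Real.pi), ‖f (circleMap 0 e1 t)‖ with hΦe
  set J₀ := (2 * Real.pi)⁻¹ * Φ1 with hJ₀
  set J₁ := (2 * Real.pi)⁻¹ * Φe with hJ₁
  have hΦ1nn : 0 ≤ Φ1 := intervalIntegral.integral_nonneg Real.two_pi_pos.le
    (fun t _ => norm_nonneg _)
  have hΦenn : 0 ≤ Φe := intervalIntegral.integral_nonneg Real.two_pi_pos.le
    (fun t _ => norm_nonneg _)
  have h2π : (0:ℝ) < 2 * Real.pi := Real.two_pi_pos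
  have hJ₀nn : 0 ≤ J₀ := mul_nonneg (inv_nonneg.2 h2π.le) hΦ1nn
  have hJ₁nn : 0 ≤ J₁ := mul_nonneg (inv_nonneg.2 h2π.le) hΦenn
  set w : ℂ := ((p : ℝ) : ℂ) with hw
  have habsw : ‖w‖ = p := by
    rw [hw, Complex.norm_real, Real.norm_eq_abs, abs_of_pos hp0]
  set x := ‖f w‖ with hx
  -- membership of circles in the annulus
  have hmem1 : ∀ t : ℝ, circleMap 0 1 t ∈ closedAnnulus := by
    intro t
    have : ‖circleMap 0 1 t‖ = 1 := by
      rw [norm_circleMap_zero]; norm_num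
    exact ⟨this.ge.trans_eq' rfl, by rw [this]; linarith⟩
  have hmeme : ∀ t : ℝ, circleMap 0 e1 t ∈ closedAnnulus := by
    intro t
    have : ‖circleMap 0 e1 t‖ = e1 := by
      rw [norm_circleMap_zero, abs_of_pos he10]
    exact ⟨by rw [this]; linarith, le_of_eq this⟩
  -- The key inequality for each integer n
  have key : ∀ n : ℤ, x ≤ a * Real.exp (-(n * θ)) * J₀ + b * Real.exp (n * (1 - θ)) * J₁ := by
    intro n
    set g : ℂ → E := fun z => (z ^ n) • f z with hg
    have hznz : ∀ z ∈ closedAnnulus, z ≠ 0 := by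
      intro z hz h
      rw [h] at hz
      simp [closedAnnulus] at hz
      linarith [hz.1]
    have hgc : ContinuousOn g closedAnnulus := by
      refine ContinuousOn.smul ?_ hc
      exact fun z hz => (continuousAt_zpow₀ z n (Or.inl (hznz z hz))).continuousWithinAt
    have hgd : ∀ z ∈ ball (0:ℂ) e1 \ closedBall 0 1, DifferentiableAt ℂ g z := by
      intro z hz
      rw [hOpenEq] at hz
      have hz0 : z ≠ 0 := by
        intro h
        rw [h] at hz
        simp [openAnnulus] at hz
        linarith [hz.1]
      exact (differentiableAt_zpow.2 (Or.inl hz0)).smul (hdiff.differentiableAt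
        (hOpen.mem_nhds hz))
    have heq := annulusCauchy (f := g) (r := 1) (R := e1) (w := w) one_pos
      (by rw [habsw]; exact hp1) (by rw [habsw]; exact hpe)
      (by rw [hAnnEq]; exact hgc) hgd
    -- continuity of compositions
    have hcont1 : Continuous fun t : ℝ => g (circleMap 0 1 t) := by
      apply Continuous.smul
      · exact continuous_iff_continuousAt.2 fun t =>
          ((continuousAt_zpow₀ _ n (Or.inl (hznz _ (hmem1 t)))).comp
            (continuous_circleMap 0 1).continuousAt)
      · exact hc.comp_continuous (continuous_circleMap 0 1) hmem1
    have hconte : Continuous fun t : ℝ => g (circleMap 0 e1 t) := by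
      apply Continuous.smul
      · exact continuous_iff_continuousAt.2 fun t =>
          ((continuousAt_zpow₀ _ n (Or.inl (hznz _ (hmeme t)))).comp
            (continuous_circleMap 0 e1).continuousAt)
      · exact hc.comp_continuous (continuous_circleMap 0 e1) hmeme
    -- distance bounds
    have hdist1 : ∀ t : ℝ, p - 1 ≤ ‖circleMap 0 1 t - w‖ := by
      intro t
      have h1 : ‖circleMap 0 1 t‖ = 1 := by rw [norm_circleMap_zero]; norm_num
      calc p - 1 = ‖w‖ - ‖circleMap 0 1 t‖ := by rw [habsw, h1]
        _ ≤ ‖w - circleMap 0 1 t‖ := by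
            simpa using norm_sub_norm_le w (circleMap 0 1 t)
        _ = ‖circleMap 0 1 t - w‖ := by rw [norm_sub_rev]
    have hdiste : ∀ t : ℝ, e1 - p ≤ ‖circleMap 0 e1 t - w‖ := by
      intro t
      have h1 : ‖circleMap 0 e1 t‖ = e1 := by
        rw [norm_circleMap_zero, abs_of_pos he10]
      calc e1 - p = ‖circleMap 0 e1 t‖ - ‖w‖ := by rw [habsw, h1]
        _ ≤ ‖circleMap 0 e1 t - w‖ := by
            simpa using norm_sub_norm_le (circleMap 0 e1 t) w
    -- the two circle integral bounds
    have hbnd1 : ‖∮ z in C(0, (1:ℝ)), (z - w)⁻¹ • g z‖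
        ≤ (1 / (p - 1)) * ∫ t in (0:ℝ)..(2 * Real.pi), ‖g (circleMap 0 1 t)‖ :=
      circleIntegral_norm_bound zero_le_one (by linarith) hdist1 hcont1
    have hbnde : ‖∮ z in C(0, e1), (z - w)⁻¹ • g z‖
        ≤ (e1 / (e1 - p)) * ∫ t in (0:ℝ)..(2 * Real.pi), ‖g (circleMap 0 e1 t)‖ :=
      circleIntegral_norm_bound he10.le (by linarith) hdiste hconte
    -- integral computation for g
    have hint1 : (∫ t in (0:ℝ)..(2 * Real.pi), ‖g (circleMap 0 1 t)‖) = Φ1 := by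
      rw [hΦ1]
      congr 1
      funext t
      rw [hg]
      simp only [norm_smul, norm_zpow, norm_circleMap_zero]
      norm_num
    have hinte : (∫ t in (0:ℝ)..(2 * Real.pi), ‖g (circleMap 0 e1 t)‖) = e1 ^ n * Φe := by
      rw [hΦe, ← intervalIntegral.integral_const_mul]
      congr 1
      funext t
      rw [hg]
      simp only [norm_smul, norm_zpow, norm_circleMap_zero,
        abs_of_pos he10]
    -- norm of g at w
    have hgw : ‖g w‖ = p ^ n * x := by
      rw [hg, hx, norm_smul, norm_zpow, hw, Complex.norm_real, Real.norm_eq_abs,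
        abs_of_pos hp0]
    -- assemble
    have hlhs : ‖(2 * Real.pi * Complex.I : ℂ) • g w‖ = 2 * Real.pi * (p ^ n * x) := by
      rw [norm_smul, hgw]
      congr 1
      simp [map_mul, Complex.norm_real,
        abs_of_pos Real.pi_pos]
    have main : 2 * Real.pi * (p ^ n * x)
        ≤ (e1 / (e1 - p)) * (e1 ^ n * Φe) + (1 / (p - 1)) * Φ1 := by
      calc 2 * Real.pi * (p ^ n * x) = ‖(2 * Real.pi * Complex.I : ℂ) • g w‖ := hlhs.symm
        _ = ‖(∮ z in C(0, e1), (z - w)⁻¹ • g z) - ∮ z in C(0, (1:ℝ)), (z - w)⁻¹ • g z‖ := by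
            rw [heq]
        _ ≤ ‖∮ z in C(0, e1), (z - w)⁻¹ • g z‖ + ‖∮ z in C(0, (1:ℝ)), (z - w)⁻¹ • g z‖ :=
            norm_sub_le _ _
        _ ≤ (e1 / (e1 - p)) * (e1 ^ n * Φe) + (1 / (p - 1)) * Φ1 := by
            rw [← hint1, ← hinte]
            exact add_le_add hbnde hbnd1
    -- convert to the exp form
    have hpn : p ^ n = Real.exp (n * θ) := exp_zpow' θ n
    have hen : e1 ^ n = Real.exp (n : ℝ) := by
      rw [he1, exp_zpow' 1 n, mul_one]
    have hA : (0:ℝ) < Real.exp (n * θ) := Real.exp_pos _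
    rw [hpn, hen] at main
    have hexp1 : Real.exp (-(↑n * θ)) = (Real.exp (↑n * θ))⁻¹ := Real.exp_neg _
    have hexp2 : Real.exp (↑n * (1 - θ)) = Real.exp (n : ℝ) * (Real.exp (↑n * θ))⁻¹ := by
      rw [← Real.exp_neg, ← Real.exp_add]
      congr 1
      ring
    rw [hexp1, hexp2, hJ₀, hJ₁, ha', hb']
    have step : x = (2 * Real.pi * (Real.exp (↑n * θ) * x)) *
        ((Real.exp (↑n * θ))⁻¹ * (2 * Real.pi)⁻¹) := by
      field_simp
    calc x = (2 * Real.pi * (Real.exp (↑n * θ) * x)) *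
        ((Real.exp (↑n * θ))⁻¹ * (2 * Real.pi)⁻¹) := step
      _ ≤ ((e1 / (e1 - p)) * (Real.exp (n:ℝ) * Φe) + (1 / (p - 1)) * Φ1) *
          ((Real.exp (↑n * θ))⁻¹ * (2 * Real.pi)⁻¹) := by
          refine mul_le_mul_of_nonneg_right main ?_
          positivity
      _ = (p - 1)⁻¹ * (Real.exp (↑n * θ))⁻¹ * ((2 * Real.pi)⁻¹ * Φ1)
          + e1 * (e1 - p)⁻¹ * (Real.exp (n:ℝ) * (Real.exp (↑n * θ))⁻¹) *
            ((2 * Real.pi)⁻¹ * Φe) := by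
          simp only [div_eq_mul_inv, one_mul]
          ring
  -- apply the optimization lemma
  have hxnn : (0:ℝ) ≤ x := norm_nonneg _
  have final := opt_lemma hθ0 hθ1 ha hb hJ₀nn hJ₁nn hxnn key
  -- identify the boundary integrals with the statement's integrals
  have hc1 : ∀ t : ℝ, Complex.exp (Complex.I * t) = circleMap 0 1 t := by
    intro t
    rw [show (Complex.I * (t:ℂ)) = (t:ℂ) * Complex.I from mul_comm _ _]
    simp [circleMap]
  have hce : ∀ t : ℝ, Complex.exp (1 + Complex.I * t) = circleMap 0 e1 t := by
    intro t
    rw [Complex.exp_add, show (Complex.I * (t:ℂ)) = (t:ℂ) * Complex.I from mul_comm _ _]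
    simp [circleMap, he1, Complex.ofReal_exp]
  simp only [hc1, hce]
  rw [ha', hb'] at final
  exact final
end
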